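/- arXiv:1911.08081 — 2 statements merged into one kernel-verified Lean document; each statement's English description precedes it below -/
import Mathlib

section
/- Let P be a nonzero homogeneous polynomial in several variables over a field. If P' is obtained from P by setting some of the variables to zero and P' factors as a product of two irreducible homogeneous polynomials P1 · P2 with deg P1 ≥ deg P2, and P'' is obtained from P by setting some (possibly different) variables to zero and factors as Q1 · Q2 with Q1, Q2 irreducible homogeneous and deg Q1 ≥ deg Q2, and if deg P1 > deg Q1 and deg P1 ≠ deg Q2, then P is irreducible. -/
open MvPolynomial

section Aux
variable {σ F : Type*} [CommRing F]

noncomputable def Phi : MvPolynomial σ F →+* Polynomial (MvPolynomial σ F) :=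
  (MvPolynomial.eval₂Hom (Polynomial.C.comp MvPolynomial.C)
    (fun i => Polynomial.C (MvPolynomial.X i) * Polynomial.X))

lemma Phi_monomial (d : σ →₀ ℕ) (c : F) :
    Phi (MvPolynomial.monomial d c) =
      Polynomial.C (MvPolynomial.monomial d c) * Polynomial.X ^ (d.degree) := by
  classical
  rw [Phi, eval₂Hom_monomial]
  simp only [RingHom.coe_comp, Function.comp_apply]
  rw [Finsupp.prod]
  simp_rw [mul_pow]
  rw [Finset.prod_mul_distrib, Finset.prod_pow_eq_pow_sum]
  simp_rw [← map_pow]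
  rw [← mul_assoc, ← map_prod, ← map_mul, Finsupp.degree]
  congr 1
  rw [MvPolynomial.monomial_eq, Finsupp.prod]

lemma hc_monomial (k : ℕ) (d : σ →₀ ℕ) (c : F) :
    homogeneousComponent k (MvPolynomial.monomial d c) =
      if d.degree = k then MvPolynomial.monomial d c else 0 := by
  classical
  ext e
  rw [coeff_homogeneousComponent]
  rcases eq_or_ne e d with rfl | hne
  · split <;> simp [MvPolynomial.coeff_monomial, *]
  · by_cases h : e.degree = k <;> by_cases h' : d.degree = k <;>
      simp_all [MvPolynomial.coeff_monomial, Ne.symm hne]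

lemma coeff_Phi (p : MvPolynomial σ F) (k : ℕ) :
    (Phi p).coeff k = homogeneousComponent k p := by
  classical
  induction p using MvPolynomial.induction_on' with
  | monomial d c =>
      rw [Phi_monomial, hc_monomial]
      rw [Polynomial.coeff_C_mul, Polynomial.coeff_X_pow]
      rcases eq_or_ne k d.degree with rfl | hk
      · simp
      · simp [hk, Ne.symm hk]
  | add p q hp hq =>
      rw [map_add, Polynomial.coeff_add, map_add, hp, hq]

/-- If all homogeneous components of `p` except possibly the `a`-th vanish,
then `p` is homogeneous of degree `a`. -/
lemma homog_of_forall_hc (p : MvPolynomial σ F) (a : ℕ)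
    (h0 : ∀ k, k ≠ a → homogeneousComponent k p = 0) : p.IsHomogeneous a := by
  classical
  have hsum := sum_homogeneousComponent p
  by_cases ha : a ∈ Finset.range (p.totalDegree + 1)
  · have : (∑ i ∈ Finset.range (p.totalDegree + 1), homogeneousComponent i p)
        = homogeneousComponent a p :=
      Finset.sum_eq_single_of_mem a ha (fun k _ hk => h0 k hk)
    rw [this] at hsum
    rw [← hsum]
    exact homogeneousComponent_isHomogeneous a p
  · have : (∑ i ∈ Finset.range (p.totalDegree + 1), homogeneousComponent i p) = 0 :=
      Finset.sum_eq_zero (fun k hk => h0 k (fun h => ha (h ▸ hk)))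
    rw [this] at hsum
    rw [← hsum]
    exact isHomogeneous_zero _ _ _

lemma Phi_ne_zero {p : MvPolynomial σ F} (hp : p ≠ 0) : Phi p ≠ 0 := by
  intro h
  apply hp
  have := sum_homogeneousComponent p
  rw [← this]
  apply Finset.sum_eq_zero
  intro k _
  rw [← coeff_Phi, h, Polynomial.coeff_zero]

/-- Factors of a nonzero homogeneous polynomial over a domain are homogeneous. -/
lemma homog_factors [IsDomain F] {A B : MvPolynomial σ F} {n : ℕ}
    (hA : A ≠ 0) (hB : B ≠ 0) (h : (A * B).IsHomogeneous n) :
    ∃ a b, a + b = n ∧ A.IsHomogeneous a ∧ B.IsHomogeneous b := by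
  classical
  have hAB : A * B ≠ 0 := mul_ne_zero hA hB
  have hfg : Phi (A * B) = Polynomial.C (A * B) * Polynomial.X ^ n := by
    ext k
    rw [coeff_Phi, Polynomial.coeff_C_mul, Polynomial.coeff_X_pow]
    have hmem : A * B ∈ homogeneousSubmodule σ F n := (mem_homogeneousSubmodule _ _).2 h
    rw [homogeneousComponent_of_mem hmem]
    rcases eq_or_ne k n with rfl | hk
    · simp
    · simp [hk, Ne.symm hk]
  have hfA := Phi_ne_zero hA
  have hfB := Phi_ne_zero hB
  have hdeg : (Phi A).natDegree + (Phi B).natDegree = n := by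
    rw [← Polynomial.natDegree_mul hfA hfB, ← map_mul, hfg]
    exact Polynomial.natDegree_C_mul_X_pow n _ hAB
  have htr : (Phi A).natTrailingDegree + (Phi B).natTrailingDegree = n := by
    rw [← Polynomial.natTrailingDegree_mul hfA hfB, ← map_mul, hfg,
      Polynomial.C_mul_X_pow_eq_monomial]
    exact Polynomial.natTrailingDegree_monomial hAB
  have hA' : (Phi A).natTrailingDegree = (Phi A).natDegree := by
    have := Polynomial.natTrailingDegree_le_natDegree (Phi A)
    have := Polynomial.natTrailingDegree_le_natDegree (Phi B)
    omega
  have hB' : (Phi B).natTrailingDegree = (Phi B).natDegree := by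
    have := Polynomial.natTrailingDegree_le_natDegree (Phi A)
    have := Polynomial.natTrailingDegree_le_natDegree (Phi B)
    omega
  refine ⟨(Phi A).natDegree, (Phi B).natDegree, hdeg, ?_, ?_⟩
  · apply homog_of_forall_hc
    intro k hk
    rw [← coeff_Phi]
    rcases lt_or_gt_of_ne hk with hlt | hgt
    · exact Polynomial.coeff_eq_zero_of_lt_natTrailingDegree (by omega)
    · exact Polynomial.coeff_eq_zero_of_natDegree_lt hgt
  · apply homog_of_forall_hc
    intro k hk
    rw [← coeff_Phi]
    rcases lt_or_gt_of_ne hk with hlt | hgt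
    · exact Polynomial.coeff_eq_zero_of_lt_natTrailingDegree (by omega)
    · exact Polynomial.coeff_eq_zero_of_natDegree_lt hgt

end Aux

section Aux2
variable {σ F : Type*} [Field F]

lemma unit_of_homog_zero {p : MvPolynomial σ F} (hp : p ≠ 0) (h : p.IsHomogeneous 0) :
    IsUnit p := by
  have hmem : p ∈ homogeneousSubmodule σ F 0 := (mem_homogeneousSubmodule _ _).2 h
  have h0 : homogeneousComponent 0 p = p := by rw [homogeneousComponent_of_mem hmem, if_pos rfl]
  rw [homogeneousComponent_zero] at h0
  have hc : MvPolynomial.coeff 0 p ≠ 0 := by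
    intro h'; apply hp; rw [← h0, h']; simp
  refine IsUnit.of_mul_eq_one (a := p) (MvPolynomial.C (MvPolynomial.coeff 0 p)⁻¹) ?_
  nth_rewrite 1 [← h0]
  rw [← map_mul, mul_inv_cancel₀ hc, map_one]

lemma homog_zero_of_unit {p : MvPolynomial σ F} (h : IsUnit p) :
    p.IsHomogeneous 0 := by
  obtain ⟨v, hv⟩ := h.exists_right_inv
  have hp : p ≠ 0 := left_ne_zero_of_mul (hv ▸ one_ne_zero)
  have hv0 : v ≠ 0 := right_ne_zero_of_mul (hv ▸ one_ne_zero)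
  have h1 : (p * v).IsHomogeneous 0 := hv ▸ isHomogeneous_one σ F
  obtain ⟨a, b, hab, hA, -⟩ := homog_factors hp hv0 h1
  obtain rfl : a = 0 := by omega
  exact hA

/-- degrees of a two-factor decomposition of `P1 * P2` with irreducible homogeneous factors -/
lemma deg_pair {X Y P1 P2 : MvPolynomial σ F} {x y n1 n2 : ℕ}
    (hX : X.IsHomogeneous x) (hY : Y.IsHomogeneous y) (hX0 : X ≠ 0) (hY0 : Y ≠ 0)
    (hYu : ¬IsUnit Y) (hXu : ¬IsUnit X)
    (h1 : P1.IsHomogeneous n1) (h2 : P2.IsHomogeneous n2)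
    (hi1 : Irreducible P1) (hi2 : Irreducible P2)
    (heq : X * Y = P1 * P2) : (x = n1 ∧ y = n2) ∨ (x = n2 ∧ y = n1) := by
  have hp1 : Prime P1 := (UniqueFactorizationMonoid.irreducible_iff_prime).1 hi1
  have hdvd : P1 ∣ X * Y := heq ▸ dvd_mul_right P1 P2
  rcases hp1.2.2 X Y hdvd with ⟨D, rfl⟩ | ⟨D, rfl⟩
  · left
    have hD : D * Y = P2 := by
      apply mul_left_cancel₀ hi1.ne_zero
      rw [← mul_assoc, heq]
    have hDu : IsUnit D := (hi2.isUnit_or_isUnit hD.symm).resolve_right hYu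
    have hD0 : D.IsHomogeneous 0 := homog_zero_of_unit hDu
    constructor
    · have : (P1 * D).IsHomogeneous n1 := by simpa using h1.mul hD0
      exact hX.inj_right this hX0
    · have : P2.IsHomogeneous y := by rw [← hD]; simpa using hD0.mul hY
      exact (h2.inj_right this hi2.ne_zero).symm
  · right
    have hD : X * D = P2 := by
      apply mul_left_cancel₀ hi1.ne_zero
      rw [← heq]; ring
    have hDu : IsUnit D := (hi2.isUnit_or_isUnit hD.symm).resolve_left hXu
    have hD0 : D.IsHomogeneous 0 := homog_zero_of_unit hDu
    constructor
    · have : P2.IsHomogeneous x := by rw [← hD]; simpa using hX.mul hD0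
      exact (h2.inj_right this hi2.ne_zero).symm
    · have : (P1 * D).IsHomogeneous n1 := by simpa using h1.mul hD0
      exact hY.inj_right this hY0

end Aux2

/-- Lemma "keylemma": if two specializations (setting some variables to zero) of a nonzero
homogeneous polynomial `P` factor into two irreducible homogeneous factors with incompatible
degrees, then `P` is irreducible. -/
theorem stmt0 {σ F : Type*} [Field F]
    (P P1 P2 Q1 Q2 : MvPolynomial σ F) (hP : P ≠ 0)
    {n n1 n2 m1 m2 : ℕ} (hhom : P.IsHomogeneous n)
    (S T : Set σ) [DecidablePred (· ∈ S)] [DecidablePred (· ∈ T)]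
    (h1 : P1.IsHomogeneous n1) (h2 : P2.IsHomogeneous n2)
    (hq1 : Q1.IsHomogeneous m1) (hq2 : Q2.IsHomogeneous m2)
    (hi1 : Irreducible P1) (hi2 : Irreducible P2)
    (hj1 : Irreducible Q1) (hj2 : Irreducible Q2)
    (hP' : aeval (fun i => if i ∈ S then 0 else X i) P = P1 * P2)
    (hP'' : aeval (fun i => if i ∈ T then 0 else X i) P = Q1 * Q2)
    (hd12 : n2 ≤ n1) (hd34 : m2 ≤ m1)
    (hgt : m1 < n1) (hne : n1 ≠ m2) :
    Irreducible P := by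
  classical
  set gS : σ → MvPolynomial σ F := fun i => if i ∈ S then 0 else X i with hgS
  set gT : σ → MvPolynomial σ F := fun i => if i ∈ T then 0 else X i with hgT
  have hgShom : ∀ i, (gS i).IsHomogeneous 1 := fun i => by
    dsimp [gS]; split
    exacts [isHomogeneous_zero _ _ _, isHomogeneous_X _ _]
  have hgThom : ∀ i, (gT i).IsHomogeneous 1 := fun i => by
    dsimp [gT]; split
    exacts [isHomogeneous_zero _ _ _, isHomogeneous_X _ _]
  have h12 : P1 * P2 ≠ 0 := mul_ne_zero hi1.ne_zero hi2.ne_zero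
  have h34 : Q1 * Q2 ≠ 0 := mul_ne_zero hj1.ne_zero hj2.ne_zero
  have hfS : (P1 * P2).IsHomogeneous n := by
    rw [← hP']; simpa using hhom.aeval gS hgShom
  have hfT : (Q1 * Q2).IsHomogeneous n := by
    rw [← hP'']; simpa using hhom.aeval gT hgThom
  have hn12 : n1 + n2 = n := (h1.mul h2).inj_right hfS h12
  have hm12 : m1 + m2 = n := (hq1.mul hq2).inj_right hfT h34
  constructor
  · intro hu
    have : IsUnit (P1 * P2) := by
      rw [← hP']; exact hu.map (aeval gS)
    exact hi1.not_isUnit (isUnit_of_mul_isUnit_left this)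
  · intro A B hAB
    by_contra hcon
    push_neg at hcon
    obtain ⟨hAu, hBu⟩ := hcon
    have hA0 : A ≠ 0 := fun h => hP (by rw [hAB, h, zero_mul])
    have hB0 : B ≠ 0 := fun h => hP (by rw [hAB, h, mul_zero])
    have hABhom : (A * B).IsHomogeneous n := hAB ▸ hhom
    obtain ⟨a, b, hab, hA, hB⟩ := homog_factors hA0 hB0 hABhom
    have ha0 : a ≠ 0 := fun h => hAu (unit_of_homog_zero hA0 (h ▸ hA))
    have hb0 : b ≠ 0 := fun h => hBu (unit_of_homog_zero hB0 (h ▸ hB))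
    -- analyze the two specializations
    have key : ∀ (g : σ → MvPolynomial σ F), (∀ i, (g i).IsHomogeneous 1) →
        ∀ (R1 R2 : MvPolynomial σ F) (k1 k2 : ℕ), R1.IsHomogeneous k1 → R2.IsHomogeneous k2 →
        Irreducible R1 → Irreducible R2 → aeval g P = R1 * R2 →
        (a = k1 ∧ b = k2) ∨ (a = k2 ∧ b = k1) := by
      intro g hg R1 R2 k1 k2 hk1 hk2 hr1 hr2 hPg
      have heq : (aeval g A) * (aeval g B) = R1 * R2 := by
        rw [← map_mul, ← hAB, hPg]
      have hR12 : R1 * R2 ≠ 0 := mul_ne_zero hr1.ne_zero hr2.ne_zero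
      have hAg0 : aeval g A ≠ 0 := left_ne_zero_of_mul (heq ▸ hR12)
      have hBg0 : aeval g B ≠ 0 := right_ne_zero_of_mul (heq ▸ hR12)
      have hAg : (aeval g A).IsHomogeneous a := by simpa using hA.aeval g hg
      have hBg : (aeval g B).IsHomogeneous b := by simpa using hB.aeval g hg
      have hAgu : ¬IsUnit (aeval g A) := fun hu =>
        ha0 (hAg.inj_right (homog_zero_of_unit hu) hAg0)
      have hBgu : ¬IsUnit (aeval g B) := fun hu =>
        hb0 (hBg.inj_right (homog_zero_of_unit hu) hBg0)
      exact deg_pair hAg hBg hAg0 hBg0 hBgu hAgu hk1 hk2 hr1 hr2 heq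
    have k1 := key gS hgShom P1 P2 n1 n2 h1 h2 hi1 hi2 hP'
    have k2 := key gT hgThom Q1 Q2 m1 m2 hq1 hq2 hj1 hj2 hP''
    omega
end

section
/- Let I and J be k-element subsets of {1,…,N} with |I ∩ J| = k−2 and N ≥ k+2. Then the intersection of the star of I and the star of J has exactly 4 elements. -/
/-- If `I, J` are `k`-subsets of `{1,…,N}` with `|I ∩ J| = k - 2` (and `N ≥ k + 2`),
then the intersection of the stars of `I` and `J` has exactly `4` elements. -/
theorem stmt3 (N k : ℕ) (hk : 2 ≤ k) (hkN : k + 2 ≤ N)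
    (I J : Finset (Fin N)) (hI : I.card = k) (hJ : J.card = k)
    (hIJ : (I ∩ J).card = k - 2) :
    (((Finset.powersetCard k (Finset.univ : Finset (Fin N))).filter
        (fun T => k - 1 ≤ (T ∩ I).card)) ∩
      ((Finset.powersetCard k (Finset.univ : Finset (Fin N))).filter
        (fun T => k - 1 ≤ (T ∩ J).card))).card = 4 := by
  classical
  have hA : (I \ J).card = 2 := by
    have := Finset.card_sdiff_add_card_inter I J
    omega
  have hB : (J \ I).card = 2 := by
    have := Finset.card_sdiff_add_card_inter J I
    rw [Finset.inter_comm] at this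
    omega
  have key : (((Finset.powersetCard k (Finset.univ : Finset (Fin N))).filter
        (fun T => k - 1 ≤ (T ∩ I).card)) ∩
      ((Finset.powersetCard k (Finset.univ : Finset (Fin N))).filter
        (fun T => k - 1 ≤ (T ∩ J).card))) =
      ((I \ J) ×ˢ (J \ I)).image (fun p => insert p.1 (insert p.2 (I ∩ J))) := by
    ext T
    simp only [Finset.mem_inter, Finset.mem_filter, Finset.mem_powersetCard,
      Finset.mem_image, Finset.mem_product, Finset.subset_univ, true_and]
    constructor
    · rintro ⟨⟨hTk, h1⟩, ⟨_, h2⟩⟩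
      have hu : (T ∩ (I ∪ J)).card + (T ∩ (I ∩ J)).card = (T ∩ I).card + (T ∩ J).card := by
        rw [Finset.inter_union_distrib_left, Finset.inter_inter_distrib_left,
          Finset.card_union_add_card_inter]
      have hle1 : (T ∩ (I ∪ J)).card ≤ k := by
        calc (T ∩ (I ∪ J)).card ≤ T.card := Finset.card_le_card Finset.inter_subset_left
        _ = k := hTk
      have hle2 : (T ∩ (I ∩ J)).card ≤ k - 2 :=
        hIJ ▸ Finset.card_le_card Finset.inter_subset_right
      have h1le : (T ∩ I).card ≤ k := by
        calc (T ∩ I).card ≤ T.card := Finset.card_le_card Finset.inter_subset_left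
        _ = k := hTk
      have h2le : (T ∩ J).card ≤ k := by
        calc (T ∩ J).card ≤ T.card := Finset.card_le_card Finset.inter_subset_left
        _ = k := hTk
      have hcu : (T ∩ (I ∪ J)).card = k := by omega
      have hci : (T ∩ (I ∩ J)).card = k - 2 := by omega
      have hc1 : (T ∩ I).card = k - 1 := by omega
      have hc2 : (T ∩ J).card = k - 1 := by omega
      have hTIU : T ∩ (I ∪ J) = T :=
        Finset.eq_of_subset_of_card_le Finset.inter_subset_left (by omega)
      have hTsub : T ⊆ I ∪ J := by
        intro x hx
        rw [← hTIU] at hx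
        exact (Finset.mem_inter.mp hx).2
      have hCT : T ∩ (I ∩ J) = I ∩ J :=
        Finset.eq_of_subset_of_card_le Finset.inter_subset_right (by omega)
      have hCsubT : I ∩ J ⊆ T := by
        intro x hx
        rw [← hCT] at hx
        exact (Finset.mem_inter.mp hx).1
      have hsdA : (T ∩ (I \ J)).card = 1 := by
        have h := Finset.card_sdiff_add_card_inter (T ∩ I) J
        have e1 : (T ∩ I) \ J = T ∩ (I \ J) := by
          ext x; simp only [Finset.mem_sdiff, Finset.mem_inter]; tauto
        have e2 : (T ∩ I) ∩ J = T ∩ (I ∩ J) := by rw [Finset.inter_assoc]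
        rw [e1, e2, hci, hc1] at h
        omega
      have hsdB : (T ∩ (J \ I)).card = 1 := by
        have h := Finset.card_sdiff_add_card_inter (T ∩ J) I
        have e1 : (T ∩ J) \ I = T ∩ (J \ I) := by
          ext x; simp only [Finset.mem_sdiff, Finset.mem_inter]; tauto
        have e2 : (T ∩ J) ∩ I = T ∩ (I ∩ J) := by
          rw [Finset.inter_assoc, Finset.inter_comm J I]
        rw [e1, e2, hci, hc2] at h
        omega
      obtain ⟨a, ha⟩ := Finset.card_eq_one.mp hsdA
      obtain ⟨b, hb⟩ := Finset.card_eq_one.mp hsdB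
      have haT : a ∈ T ∩ (I \ J) := ha ▸ Finset.mem_singleton_self a
      have hbT : b ∈ T ∩ (J \ I) := hb ▸ Finset.mem_singleton_self b
      refine ⟨⟨a, b⟩, ⟨(Finset.mem_inter.mp haT).2, (Finset.mem_inter.mp hbT).2⟩, ?_⟩
      ext x
      simp only [Finset.mem_insert]
      constructor
      · rintro (rfl | rfl | hx)
        · exact (Finset.mem_inter.mp haT).1
        · exact (Finset.mem_inter.mp hbT).1
        · exact hCsubT hx
      · intro hx
        by_cases hxI : x ∈ I <;> by_cases hxJ : x ∈ J
        · exact Or.inr (Or.inr (Finset.mem_inter.mpr ⟨hxI, hxJ⟩))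
        · have : x ∈ T ∩ (I \ J) := Finset.mem_inter.mpr ⟨hx, Finset.mem_sdiff.mpr ⟨hxI, hxJ⟩⟩
          rw [ha, Finset.mem_singleton] at this
          exact Or.inl this
        · have : x ∈ T ∩ (J \ I) := Finset.mem_inter.mpr ⟨hx, Finset.mem_sdiff.mpr ⟨hxJ, hxI⟩⟩
          rw [hb, Finset.mem_singleton] at this
          exact Or.inr (Or.inl this)
        · rcases Finset.mem_union.mp (hTsub hx) with h | h
          · exact absurd h hxI
          · exact absurd h hxJ
    · rintro ⟨⟨a, b⟩, ⟨ha, hb⟩, rfl⟩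
      dsimp only
      obtain ⟨haI, haJ⟩ := Finset.mem_sdiff.mp ha
      obtain ⟨hbJ, hbI⟩ := Finset.mem_sdiff.mp hb
      have hab : a ≠ b := fun h => hbI (h ▸ haI)
      have haC : a ∉ insert b (I ∩ J) := by
        simp only [Finset.mem_insert, Finset.mem_inter]
        push_neg
        exact ⟨hab, fun _ => haJ⟩
      have hbC : b ∉ I ∩ J := by
        simp only [Finset.mem_inter]
        exact fun h => hbI h.1
      have hcard : (insert a (insert b (I ∩ J))).card = k := by
        rw [Finset.card_insert_of_notMem haC, Finset.card_insert_of_notMem hbC, hIJ]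
        omega
      refine ⟨⟨hcard, ?_⟩, hcard, ?_⟩
      · have hsub : insert a (I ∩ J) ⊆ insert a (insert b (I ∩ J)) ∩ I := by
          intro x hx
          rcases Finset.mem_insert.mp hx with rfl | hx
          · exact Finset.mem_inter.mpr ⟨Finset.mem_insert_self _ _, haI⟩
          · exact Finset.mem_inter.mpr ⟨Finset.mem_insert_of_mem (Finset.mem_insert_of_mem hx),
              (Finset.mem_inter.mp hx).1⟩
        have : (insert a (I ∩ J)).card ≤ (insert a (insert b (I ∩ J)) ∩ I).card :=
          Finset.card_le_card hsub
        have haC' : a ∉ I ∩ J := by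
          simp only [Finset.mem_inter]; exact fun h => haJ h.2
        rw [Finset.card_insert_of_notMem haC', hIJ] at this
        omega
      · have hsub : insert b (I ∩ J) ⊆ insert a (insert b (I ∩ J)) ∩ J := by
          intro x hx
          rcases Finset.mem_insert.mp hx with rfl | hx
          · exact Finset.mem_inter.mpr ⟨Finset.mem_insert_of_mem (Finset.mem_insert_self _ _), hbJ⟩
          · exact Finset.mem_inter.mpr ⟨Finset.mem_insert_of_mem (Finset.mem_insert_of_mem hx),
              (Finset.mem_inter.mp hx).2⟩
        have : (insert b (I ∩ J)).card ≤ (insert a (insert b (I ∩ J)) ∩ J).card :=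
          Finset.card_le_card hsub
        rw [Finset.card_insert_of_notMem hbC, hIJ] at this
        omega
  rw [key, Finset.card_image_of_injOn, Finset.card_product, hA, hB]
  rintro ⟨a, b⟩ hab ⟨a', b'⟩ hab' h
  simp only [Finset.coe_product, Set.mem_prod, Finset.mem_coe, Finset.mem_sdiff] at hab hab'
  obtain ⟨⟨haI, haJ⟩, hbJ, hbI⟩ := hab
  obtain ⟨⟨haI', haJ'⟩, hbJ', hbI'⟩ := hab'
  simp only at h
  have hae : a = a' := by
    have : a ∈ insert a' (insert b' (I ∩ J)) := h ▸ Finset.mem_insert_self a _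
    simp only [Finset.mem_insert, Finset.mem_inter] at this
    rcases this with h' | h' | h'
    · exact h'
    · exact absurd (h' ▸ haI) hbI'
    · exact absurd h'.2 haJ
  have hbe : b = b' := by
    have : b ∈ insert a' (insert b' (I ∩ J)) :=
      h ▸ Finset.mem_insert_of_mem (Finset.mem_insert_self b _)
    simp only [Finset.mem_insert, Finset.mem_inter] at this
    rcases this with h' | h' | h'
    · exact absurd (h' ▸ hbJ) haJ'
    · exact h'
    · exact absurd h'.1 hbI
  simp [hae, hbe]
end
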